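/- The energy-efficiency function η_EE(P) = log₂(1 + g·P/N) / (ζ·P + P_C), with g, N, ζ, P_C > 0, is strictly quasiconcave on [0, ∞). -/

import Mathlib

theorem stmt_7 (g N ζ PC : ℝ) (hg : 0 < g) (hN : 0 < N) (hζ : 0 < ζ)
    (hPC : 0 < PC) :
    ∀ x ∈ Set.Ici (0 : ℝ), ∀ y ∈ Set.Ici (0 : ℝ), x ≠ y →
      ∀ lam : ℝ, 0 < lam → lam < 1 →
        (fun P : ℝ => Real.logb 2 (1 + g * P / N) / (ζ * P + PC))
            (lam * x + (1 - lam) * y) >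
          min (Real.logb 2 (1 + g * x / N) / (ζ * x + PC))
            (Real.logb 2 (1 + g * y / N) / (ζ * y + PC)) := by
  intro x hx y hy hxy lam hl0 hl1
  simp only [Set.mem_Ici] at hx hy
  have hl1' : 0 < 1 - lam := by linarith
  set z := lam * x + (1 - lam) * y with hz
  have hdx : 0 < ζ * x + PC := by positivity
  have hdy : 0 < ζ * y + PC := by positivity
  have hzpos : 0 ≤ z := by positivity
  have hdz : 0 < ζ * z + PC := by positivity
  have hax : 0 < 1 + g * x / N := by positivity
  have hay : 0 < 1 + g * y / N := by positivity
  have hlog2 : 0 < Real.log 2 := Real.log_pos (by norm_num)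
  set m := min (Real.logb 2 (1 + g * x / N) / (ζ * x + PC))
      (Real.logb 2 (1 + g * y / N) / (ζ * y + PC)) with hm
  have hab : (1 + g * x / N) ≠ (1 + g * y / N) := by
    intro h
    have hgx : False := by
      field_simp at h
      exact hxy (mul_left_cancel₀ hg.ne' (by linarith))
    exact hgx
  have hlog := strictConcaveOn_log_Ioi.2 (Set.mem_Ioi.mpr hax)
      (Set.mem_Ioi.mpr hay) hab hl0 hl1' (by ring)
  simp only [smul_eq_mul] at hlog
  have harg : lam * (1 + g * x / N) + (1 - lam) * (1 + g * y / N)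
      = 1 + g * z / N := by
    rw [hz]; field_simp; ring
  rw [harg] at hlog
  -- convert to logb
  have hlogbz : Real.logb 2 (1 + g * z / N)
      > lam * Real.logb 2 (1 + g * x / N)
        + (1 - lam) * Real.logb 2 (1 + g * y / N) := by
    simp only [Real.logb]
    calc lam * (Real.log (1 + g * x / N) / Real.log 2)
          + (1 - lam) * (Real.log (1 + g * y / N) / Real.log 2)
        = (lam * Real.log (1 + g * x / N)
            + (1 - lam) * Real.log (1 + g * y / N)) / Real.log 2 := by ring
      _ < Real.log (1 + g * z / N) / Real.log 2 := by gcongr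
  have hmx : m * (ζ * x + PC) ≤ Real.logb 2 (1 + g * x / N) :=
    (le_div_iff₀ hdx).mp (min_le_left _ _)
  have hmy : m * (ζ * y + PC) ≤ Real.logb 2 (1 + g * y / N) :=
    (le_div_iff₀ hdy).mp (min_le_right _ _)
  show Real.logb 2 (1 + g * z / N) / (ζ * z + PC) > m
  rw [gt_iff_lt, lt_div_iff₀ hdz]
  nlinarith [mul_le_mul_of_nonneg_left hmx (le_of_lt hl0),
    mul_le_mul_of_nonneg_left hmy (le_of_lt hl1')]
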